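/- Let C be a small linear category and B ⊆ Ob(C) a subset such that every object of C is isomorphic to a finite direct sum of objects in B (in the additive sense, i.e. C is equivalent to the additive closure of the full subcategory on B). Then the inclusion of the full subcategory C|_B into C induces an isomorphism Tr(C|_B) ≅ Tr(C). -/

import Mathlib

open CategoryTheory

/-- The direct sum of all endomorphism groups of a small preadditive (linear) category. -/
noncomputable abbrev EndSum (C : Type*) [Category C] [Preadditive C] : Type _ :=
  DirectSum C (fun x : C => x ⟶ x)

/-- The element of `EndSum C` supported at `x` with value `f : x ⟶ x`. -/
noncomputable def ofEnd {C : Type*} [Category C] [Preadditive C] (x : C) (f : x ⟶ x) :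
    EndSum C :=
  letI := Classical.decEq C
  DirectSum.of (fun x : C => x ⟶ x) x f

/-- The subgroup of `⊕ₓ End(x)` spanned by all commutators `fg - gf`. -/
noncomputable def traceRel (C : Type*) [Category C] [Preadditive C] : AddSubgroup (EndSum C) :=
  AddSubgroup.closure
    { z | ∃ (x y : C) (f : x ⟶ y) (g : y ⟶ x), z = ofEnd x (f ≫ g) - ofEnd y (g ≫ f) }

/-- The trace `Tr(C) = (⊕ₓ End(x)) / span{fg - gf}` of a linear category. -/
noncomputable def Tr (C : Type*) [Category C] [Preadditive C] : Type _ :=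
  EndSum C ⧸ traceRel C

noncomputable instance (C : Type*) [Category C] [Preadditive C] : AddCommGroup (Tr C) :=
  inferInstanceAs (AddCommGroup (EndSum C ⧸ traceRel C))

/-- The canonical projection onto the trace. -/
noncomputable def trMk {C : Type*} [Category C] [Preadditive C] : EndSum C →+ Tr C :=
  QuotientAddGroup.mk' (traceRel C)

/-- The class `[f]` in `Tr(C)` of an endomorphism `f : x ⟶ x`. -/
noncomputable def trClass {C : Type*} [Category C] [Preadditive C] (x : C) (f : x ⟶ x) :
    Tr C :=
  trMk (ofEnd x f)

open CategoryTheory.Limits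

/-! ### Auxiliary lemmas -/

section Aux
variable {C : Type*} [Category C] [Preadditive C]

lemma trClass_add (x : C) (f g : x ⟶ x) :
    trClass x (f + g) = trClass x f + trClass x g := by
  letI := Classical.decEq C
  simp only [trClass, ofEnd, ← map_add]

/-- `trClass` as an additive homomorphism. -/
noncomputable def trClassHom (x : C) : (x ⟶ x) →+ Tr C :=
  AddMonoidHom.mk' (trClass x) (trClass_add x)

lemma trClass_sum (x : C) {ι : Type*} (s : Finset ι) (f : ι → (x ⟶ x)) :
    trClass x (∑ i ∈ s, f i) = ∑ i ∈ s, trClass x (f i) :=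
  map_sum (trClassHom x) f s

lemma trClass_comm {x y : C} (f : x ⟶ y) (g : y ⟶ x) :
    trClass x (f ≫ g) = trClass y (g ≫ f) := by
  have h : ofEnd x (f ≫ g) - ofEnd y (g ≫ f) ∈ traceRel C :=
    AddSubgroup.subset_closure ⟨x, y, f, g, rfl⟩
  rw [trClass, trClass, trMk, ← sub_eq_zero]
  show (QuotientAddGroup.mk' (traceRel C) _ - QuotientAddGroup.mk' (traceRel C) _ : EndSum C ⧸ traceRel C) = 0
  rw [← map_sub]
  show QuotientAddGroup.mk _ = 0
  exact (QuotientAddGroup.eq_zero_iff _).mpr h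

lemma toAddMonoid_ofEnd [inst : DecidableEq C] {M : Type*} [AddCommMonoid M]
    (F : ∀ x : C, (x ⟶ x) →+ M) (x : C) (f : x ⟶ x) :
    DirectSum.toAddMonoid F (ofEnd x f) = F x f := by
  obtain rfl : inst = Classical.decEq C := Subsingleton.elim _ _
  letI : DecidableEq C := Classical.decEq C
  unfold ofEnd
  exact DirectSum.toAddMonoid_of F x f

end Aux

/-! ### The two maps -/

section Main
variable {C : Type*} [Category C] [Preadditive C] (B : Set C)

/-- Morphism coercion into the full subcategory, as an additive hom. -/
noncomputable def dHom {x y : C} (hx : x ∈ B) (hy : y ∈ B) :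
    (x ⟶ y) →+ ((⟨x, hx⟩ : ObjectProperty.FullSubcategory fun z => z ∈ B) ⟶ ⟨y, hy⟩) :=
  AddMonoidHom.mk' (fun f => ⟨f⟩) (fun _ _ => rfl)

lemma dHom_comp {x y z : C} (hx : x ∈ B) (hy : y ∈ B) (hz : z ∈ B)
    (f : x ⟶ y) (g : y ⟶ z) :
    dHom B hx hz (f ≫ g) = dHom B hx hy f ≫ dHom B hy hz g := rfl

/-- The map `Tr(C|B) → Tr(C)` on the direct sum level. -/
noncomputable def phi0 [DecidableEq (ObjectProperty.FullSubcategory fun z => z ∈ B)] :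
    EndSum (ObjectProperty.FullSubcategory fun z => z ∈ B) →+ Tr C :=
  DirectSum.toAddMonoid fun d =>
    AddMonoidHom.mk' (fun f : d ⟶ d => trClass d.obj f.hom) (fun f g => trClass_add d.obj f.hom g.hom)

lemma phi0_ofEnd [DecidableEq (ObjectProperty.FullSubcategory fun z => z ∈ B)]
    (d : ObjectProperty.FullSubcategory fun z => z ∈ B) (f : d ⟶ d) :
    phi0 B (ofEnd d f) = trClass d.obj f.hom :=
  toAddMonoid_ofEnd _ d f

lemma phi0_vanish [DecidableEq (ObjectProperty.FullSubcategory fun z => z ∈ B)] :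
    ∀ z ∈ traceRel (ObjectProperty.FullSubcategory fun z => z ∈ B), phi0 B z = 0 := by
  intro z hz
  have hle : traceRel (ObjectProperty.FullSubcategory fun z => z ∈ B) ≤ (phi0 B).ker := by
    rw [traceRel]
    refine (AddSubgroup.closure_le _).mpr ?_
    rintro w ⟨x, y, f, g, rfl⟩
    simp only [SetLike.mem_coe, AddMonoidHom.mem_ker]
    rw [map_sub, phi0_ofEnd, phi0_ofEnd, sub_eq_zero]
    exact trClass_comm (C := C) (x := x.obj) (y := y.obj) f.hom g.hom
  exact hle hz

/-- The induced map `Tr(C|B) → Tr(C)`. -/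
noncomputable def phi [DecidableEq (ObjectProperty.FullSubcategory fun z => z ∈ B)] :
    Tr (ObjectProperty.FullSubcategory fun z => z ∈ B) →+ Tr C :=
  QuotientAddGroup.lift _ (phi0 B) (phi0_vanish B)

lemma phi_trClass [DecidableEq (ObjectProperty.FullSubcategory fun z => z ∈ B)]
    (d : ObjectProperty.FullSubcategory fun z => z ∈ B) (f : d ⟶ d) :
    phi B (trClass d f) = trClass d.obj f.hom := by
  rw [trClass, trMk]
  exact (QuotientAddGroup.lift_mk' _ _ _).trans (phi0_ofEnd B d f)

variable [HasFiniteBiproducts C]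
variable (n : C → ℕ) (bb : ∀ x : C, Fin (n x) → C) (hb : ∀ x i, bb x i ∈ B)
  (e : ∀ x : C, x ≅ biproduct (bb x))

/-- The candidate value of the inverse map on an endomorphism `f : x ⟶ x`. -/
noncomputable def psiTerm (x : C) (f : x ⟶ x) : Tr (ObjectProperty.FullSubcategory fun z => z ∈ B) :=
  ∑ i : Fin (n x), trClass (⟨bb x i, hb x i⟩ : ObjectProperty.FullSubcategory fun z => z ∈ B)
    (dHom B (hb x i) (hb x i)
      (biproduct.ι (bb x) i ≫ (e x).inv ≫ f ≫ (e x).hom ≫ biproduct.π (bb x) i))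

lemma psiTerm_add (x : C) (f g : x ⟶ x) :
    psiTerm B n bb hb e x (f + g) = psiTerm B n bb hb e x f + psiTerm B n bb hb e x g := by
  unfold psiTerm
  rw [← Finset.sum_add_distrib]
  refine Finset.sum_congr rfl fun i _ => ?_
  rw [← trClass_add, ← map_add]
  congr 2
  simp [Preadditive.comp_add, Preadditive.add_comp]

lemma psiExpand (x y : C) (F : (biproduct (bb x) : C) ⟶ biproduct (bb y))
    (G : (biproduct (bb y) : C) ⟶ biproduct (bb x)) :
    ∑ i : Fin (n x), trClass (⟨bb x i, hb x i⟩ : ObjectProperty.FullSubcategory fun z => z ∈ B)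
      (dHom B (hb x i) (hb x i)
        (biproduct.ι (bb x) i ≫ F ≫ G ≫ biproduct.π (bb x) i))
    = ∑ i : Fin (n x), ∑ j : Fin (n y),
        trClass (⟨bb x i, hb x i⟩ : ObjectProperty.FullSubcategory fun z => z ∈ B)
          (dHom B (hb x i) (hb y j) (biproduct.ι (bb x) i ≫ F ≫ biproduct.π (bb y) j) ≫
           dHom B (hb y j) (hb x i) (biproduct.ι (bb y) j ≫ G ≫ biproduct.π (bb x) i)) := by
  refine Finset.sum_congr rfl fun i _ => ?_
  have expand : biproduct.ι (bb x) i ≫ F ≫ G ≫ biproduct.π (bb x) i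
      = ∑ j : Fin (n y), (biproduct.ι (bb x) i ≫ F ≫ biproduct.π (bb y) j) ≫
          (biproduct.ι (bb y) j ≫ G ≫ biproduct.π (bb x) i) := by
    rw [eq_comm]
    calc (∑ j : Fin (n y), (biproduct.ι (bb x) i ≫ F ≫ biproduct.π (bb y) j) ≫
            (biproduct.ι (bb y) j ≫ G ≫ biproduct.π (bb x) i))
        = biproduct.ι (bb x) i ≫ F ≫
            (∑ j : Fin (n y), biproduct.π (bb y) j ≫ biproduct.ι (bb y) j) ≫
            G ≫ biproduct.π (bb x) i := by
          simp only [Preadditive.sum_comp, Preadditive.comp_sum, Category.assoc]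
      _ = _ := by rw [biproduct.total, Category.id_comp]
  rw [expand, map_sum, trClass_sum]
  refine Finset.sum_congr rfl fun j _ => ?_
  rw [dHom_comp B (hb x i) (hb y j) (hb x i)]

lemma psiKey (x y : C) (F : (biproduct (bb x) : C) ⟶ biproduct (bb y))
    (G : (biproduct (bb y) : C) ⟶ biproduct (bb x)) :
    ∑ i : Fin (n x), trClass (⟨bb x i, hb x i⟩ : ObjectProperty.FullSubcategory fun z => z ∈ B)
      (dHom B (hb x i) (hb x i)
        (biproduct.ι (bb x) i ≫ F ≫ G ≫ biproduct.π (bb x) i))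
    = ∑ j : Fin (n y), trClass (⟨bb y j, hb y j⟩ : ObjectProperty.FullSubcategory fun z => z ∈ B)
      (dHom B (hb y j) (hb y j)
        (biproduct.ι (bb y) j ≫ G ≫ F ≫ biproduct.π (bb y) j)) := by
  rw [psiExpand B n bb hb x y F G, psiExpand B n bb hb y x G F, Finset.sum_comm]
  refine Finset.sum_congr rfl fun j _ => Finset.sum_congr rfl fun i _ => ?_
  exact trClass_comm
    (dHom B (hb x i) (hb y j) (biproduct.ι (bb x) i ≫ F ≫ biproduct.π (bb y) j))
    (dHom B (hb y j) (hb x i) (biproduct.ι (bb y) j ≫ G ≫ biproduct.π (bb x) i))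

/-- The inverse map on the direct-sum level. -/
noncomputable def psi0 [DecidableEq C] :
    EndSum C →+ Tr (ObjectProperty.FullSubcategory fun z => z ∈ B) :=
  DirectSum.toAddMonoid fun x =>
    AddMonoidHom.mk' (psiTerm B n bb hb e x) (psiTerm_add B n bb hb e x)

lemma psi0_ofEnd [DecidableEq C] (x : C) (f : x ⟶ x) :
    psi0 B n bb hb e (ofEnd x f) = psiTerm B n bb hb e x f :=
  toAddMonoid_ofEnd _ x f

lemma psi0_vanish [DecidableEq C] :
    ∀ z ∈ traceRel C, psi0 B n bb hb e z = 0 := by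
  intro z hz
  have hle : traceRel C ≤ (psi0 B n bb hb e).ker := by
    rw [traceRel]
    refine (AddSubgroup.closure_le _).mpr ?_
    rintro w ⟨x, y, f, g, rfl⟩
    simp only [SetLike.mem_coe, AddMonoidHom.mem_ker]
    rw [map_sub, psi0_ofEnd, psi0_ofEnd, sub_eq_zero]
    unfold psiTerm
    have L : ∀ i : Fin (n x),
        biproduct.ι (bb x) i ≫ (e x).inv ≫ (f ≫ g) ≫ (e x).hom ≫ biproduct.π (bb x) i
        = biproduct.ι (bb x) i ≫ ((e x).inv ≫ f ≫ (e y).hom) ≫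
            ((e y).inv ≫ g ≫ (e x).hom) ≫ biproduct.π (bb x) i := by
      intro i; simp
    have R : ∀ j : Fin (n y),
        biproduct.ι (bb y) j ≫ (e y).inv ≫ (g ≫ f) ≫ (e y).hom ≫ biproduct.π (bb y) j
        = biproduct.ι (bb y) j ≫ ((e y).inv ≫ g ≫ (e x).hom) ≫
            ((e x).inv ≫ f ≫ (e y).hom) ≫ biproduct.π (bb y) j := by
      intro j; simp
    rw [show (∑ i : Fin (n x), trClass (⟨bb x i, hb x i⟩ : ObjectProperty.FullSubcategory fun z => z ∈ B)
          (dHom B (hb x i) (hb x i)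
            (biproduct.ι (bb x) i ≫ (e x).inv ≫ (f ≫ g) ≫ (e x).hom ≫ biproduct.π (bb x) i)))
        = ∑ i : Fin (n x), trClass (⟨bb x i, hb x i⟩ : ObjectProperty.FullSubcategory fun z => z ∈ B)
          (dHom B (hb x i) (hb x i)
            (biproduct.ι (bb x) i ≫ ((e x).inv ≫ f ≫ (e y).hom) ≫
              ((e y).inv ≫ g ≫ (e x).hom) ≫ biproduct.π (bb x) i))
        from Finset.sum_congr rfl fun i _ => by rw [L i]]
    rw [show (∑ j : Fin (n y), trClass (⟨bb y j, hb y j⟩ : ObjectProperty.FullSubcategory fun z => z ∈ B)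
          (dHom B (hb y j) (hb y j)
            (biproduct.ι (bb y) j ≫ (e y).inv ≫ (g ≫ f) ≫ (e y).hom ≫ biproduct.π (bb y) j)))
        = ∑ j : Fin (n y), trClass (⟨bb y j, hb y j⟩ : ObjectProperty.FullSubcategory fun z => z ∈ B)
          (dHom B (hb y j) (hb y j)
            (biproduct.ι (bb y) j ≫ ((e y).inv ≫ g ≫ (e x).hom) ≫
              ((e x).inv ≫ f ≫ (e y).hom) ≫ biproduct.π (bb y) j))
        from Finset.sum_congr rfl fun j _ => by rw [R j]]
    exact psiKey B n bb hb x y ((e x).inv ≫ f ≫ (e y).hom) ((e y).inv ≫ g ≫ (e x).hom)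
  exact hle hz

/-- The induced map `Tr(C) → Tr(C|B)`. -/
noncomputable def psi [DecidableEq C] :
    Tr C →+ Tr (ObjectProperty.FullSubcategory fun z => z ∈ B) :=
  QuotientAddGroup.lift _ (psi0 B n bb hb e) (psi0_vanish B n bb hb e)

lemma psi_trClass [DecidableEq C] (x : C) (f : x ⟶ x) :
    psi B n bb hb e (trClass x f) = psiTerm B n bb hb e x f := by
  rw [trClass, trMk]
  exact (QuotientAddGroup.lift_mk' _ _ _).trans (psi0_ofEnd B n bb hb e x f)

/-- Composite `phi ∘ psiTerm` recovers `trClass`. -/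
lemma phi_psiTerm [DecidableEq (ObjectProperty.FullSubcategory fun z => z ∈ B)] (x : C) (f : x ⟶ x) :
    phi B (psiTerm B n bb hb e x f) = trClass x f := by
  unfold psiTerm
  rw [map_sum]
  have step1 : ∀ i : Fin (n x),
      phi B (trClass (⟨bb x i, hb x i⟩ : ObjectProperty.FullSubcategory fun z => z ∈ B)
        (dHom B (hb x i) (hb x i)
          (biproduct.ι (bb x) i ≫ (e x).inv ≫ f ≫ (e x).hom ≫ biproduct.π (bb x) i)))
      = trClass (biproduct (bb x) : C)
          (((e x).inv ≫ f ≫ (e x).hom ≫ biproduct.π (bb x) i) ≫ biproduct.ι (bb x) i) := by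
    intro i
    rw [phi_trClass]
    exact trClass_comm (biproduct.ι (bb x) i)
      ((e x).inv ≫ f ≫ (e x).hom ≫ biproduct.π (bb x) i)
  rw [Finset.sum_congr rfl fun i _ => step1 i, ← trClass_sum]
  have : (∑ i : Fin (n x),
      ((e x).inv ≫ f ≫ (e x).hom ≫ biproduct.π (bb x) i) ≫ biproduct.ι (bb x) i)
      = (e x).inv ≫ f ≫ (e x).hom := by
    calc (∑ i : Fin (n x),
        ((e x).inv ≫ f ≫ (e x).hom ≫ biproduct.π (bb x) i) ≫ biproduct.ι (bb x) i)
        = (e x).inv ≫ f ≫ (e x).hom ≫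
            (∑ i : Fin (n x), biproduct.π (bb x) i ≫ biproduct.ι (bb x) i) := by
          simp only [Preadditive.comp_sum, Preadditive.sum_comp, Category.assoc]
      _ = (e x).inv ≫ f ≫ (e x).hom := by rw [biproduct.total, Category.comp_id]
  rw [this]
  rw [trClass_comm ((e x).inv) (f ≫ (e x).hom)]
  simp

/-- Composite `psiTerm ∘ (restriction)` recovers `trClass` in the subcategory. -/
lemma psiTerm_obj (d : ObjectProperty.FullSubcategory fun z => z ∈ B) (f : d.obj ⟶ d.obj) :
    psiTerm B n bb hb e d.obj f = trClass d (dHom B d.property d.property f) := by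
  unfold psiTerm
  have step1 : ∀ i : Fin (n d.obj),
      trClass (⟨bb d.obj i, hb d.obj i⟩ : ObjectProperty.FullSubcategory fun z => z ∈ B)
        (dHom B (hb d.obj i) (hb d.obj i)
          (biproduct.ι (bb d.obj) i ≫ (e d.obj).inv ≫ f ≫ (e d.obj).hom ≫
            biproduct.π (bb d.obj) i))
      = trClass d
          (dHom B d.property d.property
            ((f ≫ (e d.obj).hom ≫ biproduct.π (bb d.obj) i) ≫
              (biproduct.ι (bb d.obj) i ≫ (e d.obj).inv))) := by
    intro i
    have assoc1 : biproduct.ι (bb d.obj) i ≫ (e d.obj).inv ≫ f ≫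
          (e d.obj).hom ≫ biproduct.π (bb d.obj) i
        = (biproduct.ι (bb d.obj) i ≫ (e d.obj).inv) ≫
            (f ≫ (e d.obj).hom ≫ biproduct.π (bb d.obj) i) := by
      simp [Category.assoc]
    rw [assoc1, dHom_comp B (hb d.obj i) d.property (hb d.obj i)]
    rw [trClass_comm (dHom B (hb d.obj i) d.property (biproduct.ι (bb d.obj) i ≫ (e d.obj).inv))
      (dHom B d.property (hb d.obj i)
        (f ≫ (e d.obj).hom ≫ biproduct.π (bb d.obj) i))]
    rw [← dHom_comp B d.property (hb d.obj i) d.property]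
  have this1 : (∑ i : Fin (n d.obj),
      (f ≫ (e d.obj).hom ≫ biproduct.π (bb d.obj) i) ≫
        (biproduct.ι (bb d.obj) i ≫ (e d.obj).inv)) = f := by
    calc (∑ i : Fin (n d.obj),
        (f ≫ (e d.obj).hom ≫ biproduct.π (bb d.obj) i) ≫
          (biproduct.ι (bb d.obj) i ≫ (e d.obj).inv))
        = f ≫ (e d.obj).hom ≫
            (∑ i : Fin (n d.obj), biproduct.π (bb d.obj) i ≫ biproduct.ι (bb d.obj) i) ≫
            (e d.obj).inv := by
          simp only [Preadditive.comp_sum, Preadditive.sum_comp, Category.assoc]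
      _ = f := by rw [biproduct.total, Category.id_comp]; simp
  have hT : ∀ (g : d.obj ⟶ d.obj),
      trClass d (dHom B d.property d.property g)
        = ((trClassHom d).comp (dHom B d.property d.property)) g := fun _ => rfl
  rw [Finset.sum_congr rfl fun i _ => step1 i,
    Finset.sum_congr rfl fun i _ => hT _,
    ← map_sum ((trClassHom d).comp (dHom B d.property d.property)), this1]
  rfl

end Main


/-- If every object of a linear category `C` is isomorphic to a finite
direct sum of objects from `B ⊆ Ob(C)`, then the inclusion of the full subcategory
`C|_B` induces an isomorphism `Tr(C|_B) ≅ Tr(C)`. -/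
theorem tr_fullSubcategory {C : Type*} [Category C] [Preadditive C] [HasFiniteBiproducts C]
    (B : Set C)
    (hB : ∀ x : C, ∃ (n : ℕ) (b : Fin n → C),
      (∀ i, b i ∈ B) ∧ Nonempty (x ≅ biproduct b)) :
    ∃ φ : Tr (ObjectProperty.FullSubcategory fun x => x ∈ B) ≃+ Tr C,
      ∀ (b : ObjectProperty.FullSubcategory fun x => x ∈ B) (f : b ⟶ b),
        φ (trClass b f) = trClass b.obj f.hom := by
  classical
  choose n bb hbmem hiso using hB
  let e : ∀ x : C, x ≅ biproduct (bb x) := fun x => (hiso x).some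
  let Φ := phi B
  let Ψ := psi B n bb hbmem e
  have comp1 : Φ.comp Ψ = AddMonoidHom.id (Tr C) := by
    apply QuotientAddGroup.addMonoidHom_ext
    refine DirectSum.addHom_ext fun x f => ?_
    show Φ (Ψ (trClass x f)) = trClass x f
    rw [show Ψ (trClass x f) = psiTerm B n bb hbmem e x f from psi_trClass B n bb hbmem e x f]
    exact phi_psiTerm B n bb hbmem e x f
  have comp2 : Ψ.comp Φ = AddMonoidHom.id (Tr (ObjectProperty.FullSubcategory fun x => x ∈ B)) := by
    apply QuotientAddGroup.addMonoidHom_ext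
    refine DirectSum.addHom_ext fun d f => ?_
    show Ψ (Φ (trClass d f)) = trClass d f
    rw [show Φ (trClass d f) = trClass d.obj f.hom from phi_trClass B d f]
    rw [show Ψ (trClass d.obj f.hom) = psiTerm B n bb hbmem e d.obj f.hom from
      psi_trClass B n bb hbmem e d.obj f.hom]
    exact psiTerm_obj B n bb hbmem e d f.hom
  refine ⟨{ toFun := Φ, invFun := Ψ,
            left_inv := fun z => DFunLike.congr_fun comp2 z,
            right_inv := fun z => DFunLike.congr_fun comp1 z,
            map_add' := map_add Φ }, ?_⟩
  intro d f
  exact phi_trClass B d f
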